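/- For every d, D ∈ ℕ there exists c > 0 such that: for every nonzero polynomial p in d real variables of degree ≤ D and every cube Q ⊆ ℝ^d, there is a subcube Q' ⊆ Q of side length c·ℓ_Q on which p has no zeros. -/

import Mathlib

open MvPolynomial

/-- The axis-parallel cube in `ℝ^d` with lower corner `x` and side length `ℓ`. -/
def Cube {d : ℕ} (x : Fin d → ℝ) (ℓ : ℝ) : Set (Fin d → ℝ) :=
  {y | ∀ i, y i ∈ Set.Icc (x i) (x i + ℓ)}

namespace Stmt10

/-- A polynomial of degree ≤ D in each variable vanishing on a (D+1)^d grid is zero. -/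
lemma grid_vanish {D : ℕ} {t : Fin (D + 1) → ℝ} (ht : Function.Injective t) :
    ∀ (d : ℕ) (p : MvPolynomial (Fin d) ℝ), (∀ i, p.degreeOf i ≤ D) →
      (∀ b : Fin d → Fin (D + 1), eval (fun i => t (b i)) p = 0) → p = 0 := by
  intro d
  induction d with
  | zero =>
      intro p _ hv
      have h := hv (fun i => 0)
      rw [p.eq_C_of_isEmpty] at h ⊢
      rw [eval_C] at h
      rw [h, map_zero]
  | succ n ih =>
      intro p hdeg hv
      set q := finSuccEquiv ℝ n p with hq
      have hcoeff : ∀ k, q.coeff k = 0 := by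
        intro k
        apply ih
        · intro j
          exact le_trans (degreeOf_coeff_finSuccEquiv p j k) (hdeg j.succ)
        · intro b
          have hu : (q.map (eval (fun i => t (b i)))) = 0 := by
            apply Polynomial.eq_zero_of_natDegree_lt_card_of_eval_eq_zero _ ht
            · intro j
              rw [← eval_eq_eval_mv_eval']
              have hcons : (Fin.cons (t j) (fun i => t (b i)) : Fin (n+1) → ℝ)
                  = fun i => t ((Fin.cons j b : Fin (n+1) → Fin (D+1)) i) := by
                funext i
                refine Fin.cases ?_ ?_ i <;> simp
              rw [hcons]
              exact hv _
            · calc (q.map (eval fun i => t (b i))).natDegree ≤ q.natDegree :=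
                    Polynomial.natDegree_map_le
                _ = p.degreeOf 0 := natDegree_finSuccEquiv p
                _ ≤ D := hdeg 0
                _ < Fintype.card (Fin (D+1)) := by simp
          have hck := congrArg (fun u => Polynomial.coeff u k) hu
          simpa [Polynomial.coeff_map] using hck
      have hq0 : q = 0 := Polynomial.ext fun k => by simp [hcoeff k]
      have hsymm := congrArg (finSuccEquiv ℝ n).symm hq0
      simpa [hq] using hsymm


variable {d D : ℕ}

/-- Exponent function of a box monomial. -/
noncomputable def toF (a : Fin d → Fin (D+1)) : Fin d →₀ ℕ :=
  Finsupp.equivFunOnFinite.symm fun i => (a i : ℕ)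

lemma toF_apply (a : Fin d → Fin (D+1)) (i : Fin d) : toF a i = a i := rfl

lemma toF_injective : Function.Injective (toF (d := d) (D := D)) := by
  intro a b h
  funext i
  have : (a i : ℕ) = b i := by
    have := congrArg (fun f => f i) h
    simpa [toF_apply] using this
  exact Fin.ext this

/-- The polynomial with coefficient vector `s` on box monomials. -/
noncomputable def Pm (s : (Fin d → Fin (D+1)) → ℝ) : MvPolynomial (Fin d) ℝ :=
  ∑ a, monomial (toF a) (s a)

/-- Joint evaluation map. -/
noncomputable def Φ (d D : ℕ) (sy : ((Fin d → Fin (D+1)) → ℝ) × (Fin d → ℝ)) : ℝ :=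
  ∑ a : Fin d → Fin (D+1), sy.1 a * ∏ i, sy.2 i ^ (a i : ℕ)

lemma eval_Pm (s : (Fin d → Fin (D+1)) → ℝ) (y : Fin d → ℝ) :
    eval y (Pm s) = Φ d D (s, y) := by
  rw [Pm, map_sum, Φ]
  refine Finset.sum_congr rfl fun a _ => ?_
  rw [eval_monomial]
  rw [Finsupp.prod_fintype _ _ (fun i => pow_zero _)]
  rfl

lemma coeff_Pm_toF (s : (Fin d → Fin (D+1)) → ℝ) (a : Fin d → Fin (D+1)) :
    (Pm s).coeff (toF a) = s a := by
  rw [Pm, coeff_sum]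
  rw [Finset.sum_eq_single a]
  · simp [coeff_monomial]
  · intro b _ hb
    rw [coeff_monomial, if_neg (fun h => hb (toF_injective h))]
  · intro h
    exact absurd (Finset.mem_univ a) h

lemma coeff_Pm_eq_zero (s : (Fin d → Fin (D+1)) → ℝ) (m : Fin d →₀ ℕ)
    (hm : ∃ i, D < m i) : (Pm s).coeff m = 0 := by
  obtain ⟨i, hi⟩ := hm
  rw [Pm, coeff_sum]
  refine Finset.sum_eq_zero fun a _ => ?_
  rw [coeff_monomial, if_neg]
  intro h
  have : toF a i = m i := by rw [h]
  rw [toF_apply] at this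
  exact absurd (this ▸ (a i).is_le) (not_le.mpr hi)

lemma Pm_rep {p : MvPolynomial (Fin d) ℝ} (hdeg : ∀ i, p.degreeOf i ≤ D) :
    Pm (D := D) (fun a => p.coeff (toF a)) = p := by
  ext m
  by_cases hm : ∀ i, m i ≤ D
  · have hma : toF (fun i => (⟨m i, Nat.lt_succ_of_le (hm i)⟩ : Fin (D+1))) = m := by
      ext i; rw [toF_apply]
    rw [← hma, coeff_Pm_toF, hma]
  · push_neg at hm
    rw [coeff_Pm_eq_zero _ _ hm]
    obtain ⟨i, hi⟩ := hm
    by_contra h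
    have hms : m ∈ p.support := mem_support_iff.mpr fun hc => h hc.symm
    exact absurd (degreeOf_le_iff.mp (hdeg i) m hms) (not_le.mpr hi)
    
lemma degreeOf_Pm_le (s : (Fin d → Fin (D+1)) → ℝ) (i : Fin d) :
    (Pm s).degreeOf i ≤ D := by
  rw [degreeOf_le_iff]
  intro m hm
  by_contra h
  exact absurd (coeff_Pm_eq_zero s m ⟨i, not_le.mp h⟩)
    (mem_support_iff.mp hm)

lemma Pm_ne_zero {s : (Fin d → Fin (D+1)) → ℝ} (hs : s ≠ 0) : Pm s ≠ 0 := by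
  intro h
  apply hs
  funext a
  have := coeff_Pm_toF s a
  rw [h] at this
  simpa using this.symm

lemma continuous_Φ : Continuous (Φ d D) := by
  apply continuous_finset_sum
  intro a _
  exact ((continuous_apply a).comp continuous_fst).mul
    (continuous_finset_prod _ fun i _ =>
      ((continuous_apply i).comp continuous_snd).pow _)

lemma Φ_smul (r : ℝ) (s : (Fin d → Fin (D+1)) → ℝ) (y : Fin d → ℝ) :
    Φ d D (r • s, y) = r * Φ d D (s, y) := by
  rw [Φ, Φ, Finset.mul_sum]
  refine Finset.sum_congr rfl fun a _ => ?_
  simp [mul_assoc]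


/-- The unit-cube case. -/
lemma unit_cube (d D : ℕ) :
    ∃ c : ℝ, 0 < c ∧ c ≤ 1/2 ∧ ∀ p : MvPolynomial (Fin d) ℝ, p ≠ 0 →
      (∀ i, p.degreeOf i ≤ D) →
      ∃ x' : Fin d → ℝ, Cube x' c ⊆ Cube 0 1 ∧ ∀ y ∈ Cube x' c, eval y p ≠ 0 := by
  classical
  -- the grid
  set t : Fin (D+1) → ℝ := fun j => (j : ℝ) / (D+1) with ht_def
  have hD1 : (0:ℝ) < (D:ℝ) + 1 := by positivity
  have ht : Function.Injective t := by
    intro j j' h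
    rw [ht_def] at h
    simp only [div_eq_div_iff hD1.ne' hD1.ne'] at h
    have h2 : (j:ℝ) = (j':ℝ) := mul_right_cancel₀ hD1.ne' h
    exact Fin.ext (by exact_mod_cast h2)
  set pt : (Fin d → Fin (D+1)) → (Fin d → ℝ) := fun b i => t (b i) with hpt_def
  have hpt01 : ∀ b i, pt b i ∈ Set.Icc (0:ℝ) 1 := by
    intro b i
    constructor
    · positivity
    · rw [hpt_def, ht_def]
      rw [div_le_one hD1]
      have : ((b i : ℕ) : ℝ) ≤ (D : ℝ) := by exact_mod_cast (b i).is_le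
      linarith
  -- compact sphere
  haveI : Nonempty (Fin d → Fin (D+1)) := inferInstance
  haveI : Nontrivial ((Fin d → Fin (D+1)) → ℝ) := inferInstance
  set K := Metric.sphere (0 : (Fin d → Fin (D+1)) → ℝ) 1 with hK_def
  have hKc : IsCompact K := isCompact_sphere 0 1
  have hKne : K.Nonempty := NormedSpace.sphere_nonempty.mpr zero_le_one
  set F : ((Fin d → Fin (D+1)) → ℝ) → ℝ :=
    fun s => ‖(fun b => Φ d D (s, pt b))‖ with hF_def
  have hF : Continuous F :=
    (continuous_pi fun b => continuous_Φ.comp (continuous_id.prodMk continuous_const)).norm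
  obtain ⟨s₀, hs₀K, hs₀min⟩ := hKc.exists_isMinOn hKne hF.continuousOn
  -- positivity of the min
  have hm₀ : 0 < F s₀ := by
    have hs₀ne : s₀ ≠ 0 := by
      intro h
      have := mem_sphere_zero_iff_norm.mp hs₀K
      rw [h, norm_zero] at this
      exact zero_ne_one this
    have hPm : Pm (D := D) s₀ ≠ 0 := Pm_ne_zero hs₀ne
    have : ¬ (∀ b : Fin d → Fin (D+1), eval (fun i => t (b i)) (Pm (D := D) s₀) = 0) :=
      fun h => hPm (grid_vanish ht d _ (degreeOf_Pm_le s₀) h)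
    push_neg at this
    obtain ⟨b, hb⟩ := this
    have hb' : Φ d D (s₀, pt b) ≠ 0 := by
      rw [← eval_Pm]; exact hb
    calc (0:ℝ) < |Φ d D (s₀, pt b)| := abs_pos.mpr hb'
      _ = ‖(fun b => Φ d D (s₀, pt b)) b‖ := (Real.norm_eq_abs _).symm
      _ ≤ F s₀ := by rw [hF_def]; exact norm_le_pi_norm (fun b => Φ d D (s₀, pt b)) b
  -- uniform continuity
  have hScomp : IsCompact (K ×ˢ Set.Icc (0 : Fin d → ℝ) 1) :=
    hKc.prod isCompact_Icc
  have hUC := hScomp.uniformContinuousOn_of_continuous continuous_Φ.continuousOn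
  rw [Metric.uniformContinuousOn_iff] at hUC
  obtain ⟨δ, hδpos, hδ⟩ := hUC (F s₀) hm₀
  set c := min (δ/2) (1/2) with hc_def
  have hcpos : 0 < c := lt_min (by linarith) (by norm_num)
  have hc12 : c ≤ 1/2 := min_le_right _ _
  have hcδ : c < δ := lt_of_le_of_lt (min_le_left _ _) (by linarith)
  refine ⟨c, hcpos, hc12, ?_⟩
  intro p hp hdeg
  set s : (Fin d → Fin (D+1)) → ℝ := fun a => p.coeff (toF a) with hs_def
  have hrep : Pm (D := D) s = p := Pm_rep hdeg
  have hs0 : s ≠ 0 := by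
    intro h
    apply hp
    rw [← hrep, h]
    simp [Pm]
  have hn : 0 < ‖s‖ := norm_pos_iff.mpr hs0
  set sn := ‖s‖⁻¹ • s with hsn_def
  have hsnK : sn ∈ K := by
    rw [hK_def, mem_sphere_zero_iff_norm, hsn_def, norm_smul, norm_inv, norm_norm]
    field_simp
  -- maximizing grid point
  obtain ⟨b₀, -, hb₀⟩ := Finset.exists_max_image Finset.univ
    (fun b => |Φ d D (sn, pt b)|) Finset.univ_nonempty
  have hM : F s₀ ≤ |Φ d D (sn, pt b₀)| := by
    refine le_trans (hs₀min hsnK) ?_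
    rw [hF_def]
    exact pi_norm_le_iff_of_nonneg (abs_nonneg _) |>.mpr fun b => by
      rw [Real.norm_eq_abs]; exact hb₀ b (Finset.mem_univ b)
  set g := pt b₀ with hg_def
  set x' : Fin d → ℝ := fun i => min (g i) (1 - c) with hx'_def
  have hx'0 : ∀ i, 0 ≤ x' i := fun i =>
    le_min (hpt01 b₀ i).1 (by linarith)
  have hsub : Cube x' c ⊆ Cube 0 1 := by
    intro y hy i
    have hyi := hy i
    simp only [Pi.zero_apply]
    constructor
    · exact le_trans (hx'0 i) hyi.1
    · have : x' i + c ≤ 1 := by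
        have := min_le_right (g i) (1 - c)
        rw [hx'_def]; dsimp only; linarith
      linarith [hyi.2]
  have hclose : ∀ y ∈ Cube x' c, ∀ i, |y i - g i| ≤ c := by
    intro y hy i
    have hyi := hy i
    rcases le_or_gt (g i) (1 - c) with h | h
    · have hx : x' i = g i := min_eq_left h
      rw [hx] at hyi
      rw [abs_sub_le_iff]
      constructor <;> [skip; skip] <;> cases' hyi with h1 h2 <;> linarith
    · have hx : x' i = 1 - c := min_eq_right h.le
      rw [hx] at hyi
      have hgi := (hpt01 b₀ i).2
      rw [abs_sub_le_iff]
      cases' hyi with h1 h2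
      constructor <;> [linarith; linarith]
  refine ⟨x', hsub, ?_⟩
  intro y hy
  have hyI : y ∈ Set.Icc (0 : Fin d → ℝ) 1 := by
    rw [Set.mem_Icc]
    constructor <;> intro i
    · exact (hsub hy i).1
    · have := (hsub hy i).2; simpa using this
  have hgI : g ∈ Set.Icc (0 : Fin d → ℝ) 1 := by
    rw [Set.mem_Icc]
    constructor <;> intro i
    · exact (hpt01 b₀ i).1
    · exact (hpt01 b₀ i).2
  have hdist : dist ((sn, y) : _ × _) (sn, g) < δ := by
    rw [Prod.dist_eq]
    have h1 : dist sn sn = 0 := dist_self _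
    have h2 : dist y g ≤ c := by
      rw [dist_pi_le_iff hcpos.le]
      intro i
      rw [Real.dist_eq]
      exact hclose y hy i
    rw [h1]
    calc max 0 (dist y g) ≤ max 0 c := max_le_max le_rfl h2
      _ = c := max_eq_right hcpos.le
      _ < δ := hcδ
  have happly := hδ (sn, y) ⟨hsnK, hyI⟩ (sn, g) ⟨hsnK, hgI⟩ hdist
  have hval : Φ d D (sn, y) ≠ 0 := by
    intro h0
    rw [Real.dist_eq, h0, zero_sub, abs_neg] at happly
    exact absurd hM (not_le.mpr happly)
  have heval : eval y p = ‖s‖ * Φ d D (sn, y) := by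
    rw [← hrep, eval_Pm, hsn_def, Φ_smul]
    field_simp
  rw [heval]
  exact mul_ne_zero hn.ne' hval


lemma totalDegree_affine {d : ℕ} (p : MvPolynomial (Fin d) ℝ) (x : Fin d → ℝ) (ℓ : ℝ) :
    (aeval (fun i => C (x i) + C ℓ * X i) p).totalDegree ≤ p.totalDegree := by
  set f : Fin d → MvPolynomial (Fin d) ℝ := fun i => C (x i) + C ℓ * X i with hf
  have hfi : ∀ i, (f i).totalDegree ≤ 1 := by
    intro i
    have h2 : (C ℓ * X i : MvPolynomial (Fin d) ℝ).totalDegree ≤ 1 :=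
      le_trans (totalDegree_mul _ _) (by simp [totalDegree_C, totalDegree_X])
    exact le_trans (totalDegree_add _ _)
      (max_le (by simp [totalDegree_C]) h2)
  conv_lhs => rw [p.as_sum, map_sum]
  refine le_trans (totalDegree_finset_sum _ _) (Finset.sup_le fun v hv => ?_)
  rw [aeval_monomial]
  refine le_trans (totalDegree_mul _ _) ?_
  have h0 : (algebraMap ℝ (MvPolynomial (Fin d) ℝ) (coeff v p)).totalDegree = 0 := by
    rw [algebraMap_eq]; exact totalDegree_C _
  rw [h0, zero_add]
  have h1 : (v.prod fun i k => f i ^ k).totalDegree ≤ v.sum fun _ e => e := by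
    rw [Finsupp.prod, Finsupp.sum]
    refine le_trans (totalDegree_finset_prod _ _) (Finset.sum_le_sum fun i _ => ?_)
    calc (f i ^ v i).totalDegree ≤ v i * (f i).totalDegree := totalDegree_pow _ _
      _ ≤ v i * 1 := Nat.mul_le_mul_left _ (hfi i)
      _ = v i := mul_one _
  exact le_trans h1 (le_totalDegree hv)

lemma eval_affine {d : ℕ} (p : MvPolynomial (Fin d) ℝ) (x : Fin d → ℝ) (ℓ : ℝ)
    (z : Fin d → ℝ) :
    eval z (aeval (fun i => C (x i) + C ℓ * X i) p)
      = eval (fun i => x i + ℓ * z i) p := by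
  rw [aeval_def, algebraMap_eq, eval₂_comp_left (eval z) C _ p]
  have h1 : (eval z).comp (C : ℝ →+* MvPolynomial (Fin d) ℝ) = RingHom.id ℝ := by
    ext r; simp
  rw [h1, eval₂_id]
  have h2 : (⇑(eval z) ∘ fun i => C (x i) + C ℓ * X i) = fun i => x i + ℓ * z i := by
    funext i; simp [Function.comp]
  rw [h2]


end Stmt10

theorem stmt_10 (d D : ℕ) :
    ∃ c > (0 : ℝ), ∀ p : MvPolynomial (Fin d) ℝ, p ≠ 0 → p.totalDegree ≤ D →
      ∀ (x : Fin d → ℝ) (ℓ : ℝ), 0 < ℓ →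
        ∃ x' : Fin d → ℝ, Cube x' (c * ℓ) ⊆ Cube x ℓ ∧
          ∀ y ∈ Cube x' (c * ℓ), MvPolynomial.eval y p ≠ 0 := by
  obtain ⟨c, hc, hc12, H⟩ := Stmt10.unit_cube d D
  refine ⟨c, hc, ?_⟩
  intro p hp hdeg x ℓ hℓ
  set q := aeval (fun i => C (x i) + C ℓ * X i) p with hq_def
  have hqeval : ∀ z, eval z q = eval (fun i => x i + ℓ * z i) p :=
    fun z => Stmt10.eval_affine p x ℓ z
  have hq0 : q ≠ 0 := by
    intro h
    apply hp
    apply MvPolynomial.funext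
    intro w
    have h1 := hqeval (fun i => (w i - x i) / ℓ)
    rw [h, map_zero] at h1
    have h2 : (fun i => x i + ℓ * ((w i - x i) / ℓ)) = w := by
      funext i; field_simp; ring
    rw [h2] at h1
    rw [map_zero]
    exact h1.symm
  have hqdeg : ∀ i, q.degreeOf i ≤ D := fun i =>
    le_trans (degreeOf_le_totalDegree q i)
      (le_trans (Stmt10.totalDegree_affine p x ℓ) hdeg)
  obtain ⟨xz, hsub, hnz⟩ := H q hq0 hqdeg
  refine ⟨fun i => x i + ℓ * xz i, ?_, ?_⟩ <;>
  · intro y hy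
    have hz : (fun i => (y i - x i) / ℓ) ∈ Cube xz c := by
      intro i
      have h1 : x i + ℓ * xz i ≤ y i := (hy i).1
      have h2 : y i ≤ x i + ℓ * xz i + c * ℓ := (hy i).2
      constructor
      · rw [le_div_iff₀ hℓ]; nlinarith
      · rw [div_le_iff₀ hℓ]; nlinarith
    have hz01 := hsub hz
    first
    | -- subset claim
      (intro i
       have h01 := hz01 i
       simp only [Pi.zero_apply, Set.mem_Icc, zero_add] at h01
       have hyi : y i = x i + ℓ * ((y i - x i) / ℓ) := by field_simp; ring
       constructor
       · nlinarith [h01.1, h01.2]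
       · nlinarith [h01.1, h01.2])
    | -- nonvanishing claim
      (have h3 := hnz _ hz
       have h4 := hqeval (fun i => (y i - x i) / ℓ)
       have h5 : (fun i => x i + ℓ * ((y i - x i) / ℓ)) = y := by
         funext i; field_simp; ring
       rw [h4, h5] at h3
       exact h3)
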